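/- arXiv:2310.15407 — 5 statements merged into one kernel-verified Lean document; each statement's English description precedes it below -/
import Mathlib

section
/- Let τ > 0, 0 < κ < 1 with κ > (i-1)/i for a positive integer i, and ϑ(0) > 0. Then the i-th derivative of ϑ(t) = ((ϑ(0))^{1-κ} - τ(1-κ)t)^{1/(1-κ)} on [0, T₀) equals (-τ)^i · ∏_{j=1}^{i-1}(jκ - j + 1) · ((ϑ(0))^{1-κ} - τ(1-κ)t)^{1/(1-κ) - i}, and this expression remains bounded as t → T₀⁻ (the exponent 1/(1-κ) - i is nonnegative). -/
open Real Set Finset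

lemma aux_iter (a c p : ℝ) : ∀ (n : ℕ) (t : ℝ), 0 < c - a * t →
    iteratedDeriv n (fun s => (c - a * s) ^ p) t =
      (-a) ^ n * (∏ j ∈ Finset.range n, (p - j)) * (c - a * t) ^ (p - n) := by
  intro n
  induction n with
  | zero => intro t ht; simp
  | succ n ih =>
    intro t ht
    rw [iteratedDeriv_succ]
    have hopen : IsOpen {s : ℝ | 0 < c - a * s} :=
      isOpen_lt continuous_const (by continuity)
    have hev : iteratedDeriv n (fun s => (c - a * s) ^ p) =ᶠ[nhds t]
        (fun s => (-a) ^ n * (∏ j ∈ Finset.range n, (p - j)) * (c - a * s) ^ (p - n)) := by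
      filter_upwards [hopen.mem_nhds ht] with s hs using ih s hs
    rw [hev.deriv_eq]
    have h1 : HasDerivAt (fun s : ℝ => c - a * s) (-a) t := by
      simpa using ((hasDerivAt_id t).const_mul a).const_sub c
    have h2 := (h1.rpow_const (p := p - n) (Or.inl ht.ne')).const_mul
      ((-a) ^ n * ∏ j ∈ Finset.range n, (p - (j : ℝ)))
    rw [h2.deriv, Finset.prod_range_succ]
    have he : p - (n : ℝ) - 1 = p - ((n : ℕ) + 1 : ℕ) := by push_cast; ring
    rw [he]
    ring

theorem stmt_2 (τ κ ϑ0 T0 : ℝ) (i : ℕ) (ϑ : ℝ → ℝ)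
    (hτ : 0 < τ) (hκ0 : 0 < κ) (hκ1 : κ < 1) (hϑ0 : 0 < ϑ0)
    (hi : 0 < i) (hκi : ((i : ℝ) - 1) / i < κ)
    (hT0 : T0 = ϑ0 ^ (1 - κ) / (τ * (1 - κ)))
    (hϑ : ∀ t : ℝ, ϑ t = (ϑ0 ^ (1 - κ) - τ * (1 - κ) * t) ^ (1 / (1 - κ))) :
    (∀ t ∈ Set.Ico (0 : ℝ) T0,
      iteratedDeriv i ϑ t =
        (-τ) ^ i * (∏ j ∈ Finset.Icc 1 (i - 1), ((j : ℝ) * κ - j + 1)) *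
          (ϑ0 ^ (1 - κ) - τ * (1 - κ) * t) ^ (1 / (1 - κ) - i)) ∧
    (0 ≤ 1 / (1 - κ) - (i : ℝ)) ∧
    (∃ M : ℝ, ∀ t ∈ Set.Ico (0 : ℝ) T0, |iteratedDeriv i ϑ t| ≤ M) := by
  have h1κ : 0 < 1 - κ := by linarith
  set c : ℝ := ϑ0 ^ (1 - κ) with hc_def
  set a : ℝ := τ * (1 - κ) with ha_def
  set p : ℝ := 1 / (1 - κ) with hp_def
  have hc : 0 < c := Real.rpow_pos_of_pos hϑ0 _
  have ha : 0 < a := mul_pos hτ h1κ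
  have hϑf : ϑ = fun s => (c - a * s) ^ p := funext hϑ
  have hbase : ∀ t ∈ Set.Ico (0 : ℝ) T0, 0 < c - a * t := by
    intro t ht
    have h2 : t < c / a := by rw [hT0] at ht; exact ht.2
    have := (lt_div_iff₀ ha).mp h2
    linarith [this]
  -- coefficient equality
  have hipos : (0 : ℝ) < i := by exact_mod_cast hi
  have hcoef : (-a) ^ i * (∏ j ∈ Finset.range i, (p - j)) =
      (-τ) ^ i * (∏ j ∈ Finset.Icc 1 (i - 1), ((j : ℝ) * κ - j + 1)) := by
    have h1 : ∀ j : ℕ, p - (j : ℝ) = ((j : ℝ) * κ - j + 1) / (1 - κ) := by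
      intro j
      rw [hp_def]
      field_simp
      ring
    have h2 : (∏ j ∈ Finset.range i, (p - (j : ℝ))) =
        (∏ j ∈ Finset.range i, ((j : ℝ) * κ - j + 1)) / (1 - κ) ^ i := by
      calc (∏ j ∈ Finset.range i, (p - (j : ℝ)))
          = ∏ j ∈ Finset.range i, (((j : ℝ) * κ - j + 1) / (1 - κ)) :=
            Finset.prod_congr rfl fun j _ => h1 j
        _ = (∏ j ∈ Finset.range i, ((j : ℝ) * κ - j + 1)) /
              ∏ _j ∈ Finset.range i, (1 - κ) := Finset.prod_div_distrib _ _
        _ = (∏ j ∈ Finset.range i, ((j : ℝ) * κ - j + 1)) / (1 - κ) ^ i := by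
            rw [Finset.prod_const, Finset.card_range]
    have hset : Finset.range i = insert 0 (Finset.Icc 1 (i - 1)) := by
      ext j
      simp only [Finset.mem_range, Finset.mem_insert, Finset.mem_Icc]
      omega
    have h3 : (∏ j ∈ Finset.range i, ((j : ℝ) * κ - j + 1)) =
        ∏ j ∈ Finset.Icc 1 (i - 1), ((j : ℝ) * κ - j + 1) := by
      rw [hset, Finset.prod_insert (by simp)]
      simp
    have hna : (-a) ^ i = (-τ) ^ i * (1 - κ) ^ i := by
      rw [ha_def, ← mul_pow]; ring_nf
    rw [h2, h3, hna]
    rw [mul_assoc]; congr 1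
    rw [mul_comm]; exact div_mul_cancel₀ _ (pow_ne_zero _ h1κ.ne')
  have hpart1 : ∀ t ∈ Set.Ico (0 : ℝ) T0,
      iteratedDeriv i ϑ t =
        (-τ) ^ i * (∏ j ∈ Finset.Icc 1 (i - 1), ((j : ℝ) * κ - j + 1)) *
          (c - a * t) ^ (p - i) := by
    intro t ht
    rw [hϑf, aux_iter a c p i t (hbase t ht), hcoef]
  have hexp : 0 ≤ p - (i : ℝ) := by
    have h4 : (i : ℝ) - 1 < κ * i := by
      have := (div_lt_iff₀ hipos).mp hκi
      linarith
    have h5 : (i : ℝ) * (1 - κ) < 1 := by nlinarith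
    have h6 : (i : ℝ) < p := by
      rw [hp_def]
      exact (lt_div_iff₀ h1κ).mpr h5
    linarith
  refine ⟨hpart1, hexp, ?_⟩
  refine ⟨|(-τ) ^ i * (∏ j ∈ Finset.Icc 1 (i - 1), ((j : ℝ) * κ - j + 1))| * c ^ (p - i), ?_⟩
  intro t ht
  rw [hpart1 t ht, abs_mul, abs_of_nonneg (Real.rpow_nonneg (hbase t ht).le _)]
  refine mul_le_mul_of_nonneg_left ?_ (abs_nonneg _)
  refine Real.rpow_le_rpow (hbase t ht).le ?_ hexp
  nlinarith [ht.1, ha]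
end

section
/- For real z₂ and α₁ with |α₁| < k_{c2}, |z₂ + α₁| < k_{c2}, and k_{c2} > 0, the integral ∫₀^{z₂} σ k_{c2}²/(k_{c2}² − (σ + α₁)²) dσ is well-defined, nonnegative, and equals zero if and only if z₂ = 0. -/
theorem stmt_10 (kc z₂ α₁ : ℝ) (hkc : 0 < kc)
    (hα : |α₁| < kc) (hx : |z₂ + α₁| < kc) :
    IntervalIntegrable (fun σ => σ * kc ^ 2 / (kc ^ 2 - (σ + α₁) ^ 2)) MeasureTheory.volume 0 z₂ ∧
    0 ≤ ∫ σ in (0 : ℝ)..z₂, σ * kc ^ 2 / (kc ^ 2 - (σ + α₁) ^ 2) ∧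
    ((∫ σ in (0 : ℝ)..z₂, σ * kc ^ 2 / (kc ^ 2 - (σ + α₁) ^ 2)) = 0 ↔ z₂ = 0) := by
  obtain ⟨ha1, ha2⟩ := abs_lt.1 hα
  obtain ⟨hx1, hx2⟩ := abs_lt.1 hx
  have key : ∀ σ ∈ Set.uIcc (0:ℝ) z₂, 0 < kc ^ 2 - (σ + α₁) ^ 2 := by
    intro σ hσ
    rw [Set.mem_uIcc] at hσ
    have h5 : (σ + α₁) ^ 2 < kc ^ 2 := by
      rcases hσ with ⟨h3, h4⟩ | ⟨h3, h4⟩ <;>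
        exact sq_lt_sq' (by linarith) (by linarith)
    linarith
  have hcont : ContinuousOn (fun σ => σ * kc ^ 2 / (kc ^ 2 - (σ + α₁) ^ 2))
      (Set.uIcc (0:ℝ) z₂) := by
    apply ContinuousOn.div
    · exact (continuous_id.mul continuous_const).continuousOn
    · exact (continuous_const.sub ((continuous_id.add continuous_const).pow 2)).continuousOn
    · exact fun σ hσ => (key σ hσ).ne'
  have hint : IntervalIntegrable (fun σ => σ * kc ^ 2 / (kc ^ 2 - (σ + α₁) ^ 2))
      MeasureTheory.volume 0 z₂ := hcont.intervalIntegrable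
  have hposint : z₂ ≠ 0 → 0 < ∫ σ in (0:ℝ)..z₂, σ * kc ^ 2 / (kc ^ 2 - (σ + α₁) ^ 2) := by
    intro hne
    rcases lt_or_gt_of_ne hne with hlt | hgt
    · have key' : ∀ σ ∈ Set.Ioo z₂ (0:ℝ),
          0 < -(σ * kc ^ 2 / (kc ^ 2 - (σ + α₁) ^ 2)) := by
        intro σ hσ
        have hd := key σ (by rw [Set.mem_uIcc]; right; exact ⟨hσ.1.le, hσ.2.le⟩)
        have hnum : σ * kc ^ 2 < 0 := mul_neg_of_neg_of_pos hσ.2 (by positivity)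
        have := div_neg_of_neg_of_pos hnum hd
        linarith
      have hint' : IntervalIntegrable
          (fun σ => -(σ * kc ^ 2 / (kc ^ 2 - (σ + α₁) ^ 2))) MeasureTheory.volume z₂ 0 :=
        hint.symm.neg
      have hpos := intervalIntegral.intervalIntegral_pos_of_pos_on hint' key' hlt
      rw [intervalIntegral.integral_neg, intervalIntegral.integral_symm 0 z₂] at hpos
      linarith
    · have key' : ∀ σ ∈ Set.Ioo (0:ℝ) z₂,
          0 < σ * kc ^ 2 / (kc ^ 2 - (σ + α₁) ^ 2) := by
        intro σ hσ
        have hd := key σ (by rw [Set.mem_uIcc]; left; exact ⟨hσ.1.le, hσ.2.le⟩)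
        exact div_pos (mul_pos hσ.1 (by positivity)) hd
      exact intervalIntegral.intervalIntegral_pos_of_pos_on hint key' hgt
  refine ⟨hint, ?_, ?_⟩
  · rcases eq_or_ne z₂ 0 with rfl | hne
    · simp
    · exact (hposint hne).le
  · constructor
    · intro h
      by_contra hne
      exact absurd h (hposint hne).ne'
    · rintro rfl
      simp
end

section
/- For k_c > 0, α ∈ ℝ with |α| < k_c, and z ∈ ℝ with |z + α| < k_c, the iBLF satisfies the upper bound ∫₀^{z} σ k_c²/(k_c² − (σ + α)²) dσ ≤ k_c² z²/(k_c² − (z + α)²). -/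
theorem stmt_13 (kc α z : ℝ) (hkc : 0 < kc)
    (hα : |α| < kc) (hx : |z + α| < kc) :
    (∫ σ in (0 : ℝ)..z, σ * kc ^ 2 / (kc ^ 2 - (σ + α) ^ 2)) ≤
      kc ^ 2 * z ^ 2 / (kc ^ 2 - (z + α) ^ 2) := by
  obtain ⟨ha1, ha2⟩ := abs_lt.mp hα
  obtain ⟨hx1, hx2⟩ := abs_lt.mp hx
  have hDz : 0 < kc ^ 2 - (z + α) ^ 2 := by nlinarith
  set g : ℝ → ℝ := fun σ => σ * kc ^ 2 / (kc ^ 2 - (σ + α) ^ 2) with hg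
  rcases le_total 0 z with hz | hz
  · have hP : ∀ σ ∈ Set.Icc (0:ℝ) z, 0 < kc ^ 2 - (σ + α) ^ 2 := by
      intro σ hσ
      obtain ⟨h1, h2⟩ := hσ
      nlinarith
    have hcont : ContinuousOn g (Set.Icc 0 z) := by
      apply ContinuousOn.div (by fun_prop) (by fun_prop)
      intro σ hσ; exact ne_of_gt (hP σ hσ)
    have hint : IntervalIntegrable g MeasureTheory.volume 0 z := by
      apply ContinuousOn.intervalIntegrable
      rwa [Set.uIcc_of_le hz]
    have hmono : ∀ σ ∈ Set.Icc (0:ℝ) z,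
        g σ ≤ kc ^ 2 * z / (kc ^ 2 - (z + α) ^ 2) := by
      intro σ hσ
      obtain ⟨h1, h2⟩ := hσ
      have hDσ := hP σ ⟨h1, h2⟩
      have hkey : 0 ≤ (z - σ) * (kc ^ 2 - α ^ 2 + σ * z) :=
        mul_nonneg (by linarith) (by nlinarith [mul_nonneg h1 hz])
      rw [hg]
      rw [div_le_div_iff₀ hDσ hDz]
      nlinarith [mul_nonneg (sq_nonneg kc) hkey]
    calc (∫ σ in (0:ℝ)..z, g σ)
        ≤ ∫ _σ in (0:ℝ)..z, kc ^ 2 * z / (kc ^ 2 - (z + α) ^ 2) :=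
          intervalIntegral.integral_mono_on hz hint intervalIntegrable_const hmono
      _ = kc ^ 2 * z ^ 2 / (kc ^ 2 - (z + α) ^ 2) := by
          rw [intervalIntegral.integral_const]
          rw [smul_eq_mul, mul_div_assoc']
          ring
  · have hP : ∀ σ ∈ Set.Icc z (0:ℝ), 0 < kc ^ 2 - (σ + α) ^ 2 := by
      intro σ hσ
      obtain ⟨h1, h2⟩ := hσ
      nlinarith
    have hcont : ContinuousOn g (Set.Icc z 0) := by
      apply ContinuousOn.div (by fun_prop) (by fun_prop)
      intro σ hσ; exact ne_of_gt (hP σ hσ)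
    have hint : IntervalIntegrable g MeasureTheory.volume z 0 := by
      apply ContinuousOn.intervalIntegrable
      rwa [Set.uIcc_of_le hz]
    have hmono : ∀ σ ∈ Set.Icc z (0:ℝ),
        kc ^ 2 * z / (kc ^ 2 - (z + α) ^ 2) ≤ g σ := by
      intro σ hσ
      obtain ⟨h1, h2⟩ := hσ
      have hDσ := hP σ ⟨h1, h2⟩
      have hkey : 0 ≤ (σ - z) * (kc ^ 2 - α ^ 2 + σ * z) :=
        mul_nonneg (by linarith) (by nlinarith [mul_nonneg (neg_nonneg.mpr h2) (neg_nonneg.mpr hz)])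
      rw [hg]
      rw [div_le_div_iff₀ hDz hDσ]
      nlinarith [mul_nonneg (sq_nonneg kc) hkey]
    have h2 : (∫ _σ in z..(0:ℝ), kc ^ 2 * z / (kc ^ 2 - (z + α) ^ 2))
        ≤ ∫ σ in z..(0:ℝ), g σ :=
      intervalIntegral.integral_mono_on hz intervalIntegrable_const hint hmono
    have h3 : (∫ _σ in z..(0:ℝ), kc ^ 2 * z / (kc ^ 2 - (z + α) ^ 2))
        = -(kc ^ 2 * z ^ 2 / (kc ^ 2 - (z + α) ^ 2)) := by
      rw [intervalIntegral.integral_const, smul_eq_mul, mul_div_assoc', ← neg_div]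
      congr 1
      ring
    rw [intervalIntegral.integral_symm]
    linarith
end

section
/- The function N(ζ) = e^{ζ²}·cos((π/2)ζ) is an even function satisfying lim sup_{s→∞} (1/s)∫₀ˢ N(ζ)dζ = +∞ and lim inf_{s→∞} (1/s)∫₀ˢ N(ζ)dζ = −∞ (i.e., it is a Nussbaum-type function). -/
open Real Filter

noncomputable def Nf (ζ : ℝ) : ℝ := Real.exp (ζ ^ 2) * Real.cos ((π / 2) * ζ)

lemma Nf_cont : Continuous Nf := by
  unfold Nf; fun_prop

lemma Nf_int (a b : ℝ) : IntervalIntegrable Nf MeasureTheory.volume a b :=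
  Nf_cont.intervalIntegrable a b

lemma absF (s : ℝ) (hs : 0 ≤ s) :
    |∫ ζ in (0:ℝ)..s, Nf ζ| ≤ s * Real.exp (s ^ 2) := by
  have h := intervalIntegral.norm_integral_le_of_norm_le_const
    (a := (0:ℝ)) (b := s) (C := Real.exp (s ^ 2)) (f := Nf) ?_
  · simpa [abs_of_nonneg hs, mul_comm] using h
  · intro x hx
    rw [Set.uIoc_of_le hs] at hx
    have hx1 : 0 < x := hx.1
    have hx2 : x ≤ s := hx.2
    have h1 : Real.exp (x ^ 2) ≤ Real.exp (s ^ 2) := by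
      apply Real.exp_le_exp.2; nlinarith
    have h2 : |Real.cos ((π / 2) * x)| ≤ 1 := Real.abs_cos_le_one _
    have : ‖Nf x‖ = Real.exp (x ^ 2) * |Real.cos ((π / 2) * x)| := by
      rw [Real.norm_eq_abs]; unfold Nf
      rw [abs_mul, abs_of_nonneg (Real.exp_nonneg _)]
    rw [this]
    calc Real.exp (x ^ 2) * |Real.cos ((π / 2) * x)| ≤ Real.exp (x ^ 2) * 1 :=
          mul_le_mul_of_nonneg_left h2 (Real.exp_nonneg _)
      _ ≤ Real.exp (s ^ 2) := by rw [mul_one]; exact h1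

lemma cos_shift (n : ℕ) (ζ : ℝ) :
    Real.cos ((π / 2) * ζ) = Real.cos ((π / 2) * (ζ - 4 * n)) := by
  have := Real.cos_sub_int_mul_two_pi ((π / 2) * ζ) (n : ℤ)
  rw [← this]
  push_cast
  ring_nf

lemma cos_nonneg_near (n : ℕ) (ζ : ℝ) (h : |ζ - 4 * n| ≤ 1) :
    0 ≤ Real.cos ((π / 2) * ζ) := by
  rw [cos_shift n ζ]
  apply Real.cos_nonneg_of_mem_Icc
  have hpi : 0 < π := Real.pi_pos
  rw [abs_le] at h
  constructor
  · nlinarith [h.1]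
  · nlinarith [h.2]

lemma cos_ge_half_near (n : ℕ) (ζ : ℝ) (h : |ζ - 4 * n| ≤ 1 / 2) :
    1 / 2 ≤ Real.cos ((π / 2) * ζ) := by
  rw [cos_shift n ζ]
  have hle := Real.one_sub_sq_div_two_le_cos (x := (π / 2) * (ζ - 4 * n))
  have hpi : 0 < π := Real.pi_pos
  have hpi4 : π ≤ 4 := Real.pi_le_four
  rw [abs_le] at h
  have ht2 : (ζ - 4 * n) ^ 2 ≤ 1 / 4 := by nlinarith [h.1, h.2]
  have hp2 : π ^ 2 ≤ 16 := by nlinarith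
  have hsq : ((π / 2) * (ζ - 4 * n)) ^ 2 ≤ 1 := by
    nlinarith [mul_le_mul hp2 ht2 (sq_nonneg (ζ - 4 * n)) (by norm_num : (0:ℝ) ≤ 16)]
  linarith

lemma cos_nonpos_near (n : ℕ) (ζ : ℝ) (h : |ζ - (4 * n + 2)| ≤ 1) :
    Real.cos ((π / 2) * ζ) ≤ 0 := by
  rw [cos_shift n ζ]
  apply Real.cos_nonpos_of_pi_div_two_le_of_le
  · have hpi : 0 < π := Real.pi_pos
    rw [abs_le] at h
    nlinarith [h.1]
  · have hpi : 0 < π := Real.pi_pos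
    rw [abs_le] at h
    nlinarith [h.2]

lemma cos_le_neg_half_near (n : ℕ) (ζ : ℝ) (h : |ζ - (4 * n + 2)| ≤ 1 / 2) :
    Real.cos ((π / 2) * ζ) ≤ -(1 / 2) := by
  rw [cos_shift n ζ]
  have key : (π / 2) * (ζ - 4 * n) = π - ((π / 2) * ((4 * n + 2) - ζ)) := by ring
  rw [key, Real.cos_pi_sub]
  have hle := Real.one_sub_sq_div_two_le_cos (x := (π / 2) * ((4 * n + 2) - ζ))
  have hpi : 0 < π := Real.pi_pos
  have hpi4 : π ≤ 4 := Real.pi_le_four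
  rw [abs_le] at h
  have ht2 : ((4 * n + 2) - ζ) ^ 2 ≤ 1 / 4 := by nlinarith [h.1, h.2]
  have hp2 : π ^ 2 ≤ 16 := by nlinarith
  have hsq : ((π / 2) * ((4 * n + 2) - ζ)) ^ 2 ≤ 1 := by
    nlinarith [mul_le_mul hp2 ht2 (sq_nonneg ((4 * n + 2) - ζ)) (by norm_num : (0:ℝ) ≤ 16)]
  linarith

lemma humpPos (n : ℕ) (hn : 1 ≤ n) :
    (1 / 2) * Real.exp ((4 * (n:ℝ) - 1 / 2) ^ 2) ≤
      ∫ ζ in ((4 * (n:ℝ)) - 1)..((4 * (n:ℝ)) + 1), Nf ζ := by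
  set a : ℝ := 4 * (n:ℝ) with ha_def
  have ha : 4 ≤ a := by
    have : (1:ℝ) ≤ (n:ℝ) := by exact_mod_cast hn
    simp only [ha_def]; linarith
  have e1 : (∫ ζ in (a - 1)..(a - 1/2), Nf ζ) + (∫ ζ in (a - 1/2)..(a + 1), Nf ζ)
      = ∫ ζ in (a - 1)..(a + 1), Nf ζ :=
    intervalIntegral.integral_add_adjacent_intervals (Nf_int _ _) (Nf_int _ _)
  have e2 : (∫ ζ in (a - 1/2)..(a + 1/2), Nf ζ) + (∫ ζ in (a + 1/2)..(a + 1), Nf ζ)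
      = ∫ ζ in (a - 1/2)..(a + 1), Nf ζ :=
    intervalIntegral.integral_add_adjacent_intervals (Nf_int _ _) (Nf_int _ _)
  have h1 : 0 ≤ ∫ ζ in (a - 1)..(a - 1/2), Nf ζ := by
    apply intervalIntegral.integral_nonneg (by linarith)
    intro u hu
    have hu1 := hu.1; have hu2 := hu.2
    have : |u - 4 * n| ≤ 1 := by rw [abs_le]; constructor <;> [linarith; linarith]
    exact mul_nonneg (Real.exp_nonneg _) (cos_nonneg_near n u this)
  have h3 : 0 ≤ ∫ ζ in (a + 1/2)..(a + 1), Nf ζ := by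
    apply intervalIntegral.integral_nonneg (by linarith)
    intro u hu
    have hu1 := hu.1; have hu2 := hu.2
    have : |u - 4 * n| ≤ 1 := by rw [abs_le]; constructor <;> [linarith; linarith]
    exact mul_nonneg (Real.exp_nonneg _) (cos_nonneg_near n u this)
  have h2 : (1 / 2) * Real.exp ((a - 1 / 2) ^ 2) ≤
      ∫ ζ in (a - 1/2)..(a + 1/2), Nf ζ := by
    have hmono := intervalIntegral.integral_mono_on
      (f := fun _ : ℝ => (1 / 2) * Real.exp ((a - 1 / 2) ^ 2)) (g := Nf)
      (a := a - 1/2) (b := a + 1/2) (μ := MeasureTheory.volume)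
      (by linarith) (intervalIntegrable_const) (Nf_int _ _) ?_
    · have hc : (∫ _ in (a - 1/2)..(a + 1/2),
          ((1 / 2) * Real.exp ((a - 1 / 2) ^ 2) : ℝ)) =
          (1 / 2) * Real.exp ((a - 1 / 2) ^ 2) := by
        rw [intervalIntegral.integral_const]
        have : (a + 1/2) - (a - 1/2) = 1 := by ring
        rw [this, one_smul]
      rw [hc] at hmono
      exact hmono
    · intro x hx
      have hx1 := hx.1; have hx2 := hx.2
      have habs : |x - 4 * n| ≤ 1 / 2 := by
        rw [abs_le]; constructor <;> [linarith; linarith]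
      have hcos := cos_ge_half_near n x habs
      have hexp : Real.exp ((a - 1 / 2) ^ 2) ≤ Real.exp (x ^ 2) := by
        apply Real.exp_le_exp.2; nlinarith
      unfold Nf
      calc (1 / 2) * Real.exp ((a - 1 / 2) ^ 2) ≤ (1 / 2) * Real.exp (x ^ 2) := by
            linarith
        _ ≤ Real.exp (x ^ 2) * Real.cos ((π / 2) * x) := by
            nlinarith [Real.exp_nonneg (x ^ 2)]
  linarith

lemma humpNeg (n : ℕ) (hn : 1 ≤ n) :
    (∫ ζ in ((4 * (n:ℝ)) + 1)..((4 * (n:ℝ)) + 3), Nf ζ) ≤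
      -((1 / 2) * Real.exp ((4 * (n:ℝ) + 3 / 2) ^ 2)) := by
  set a : ℝ := 4 * (n:ℝ) with ha_def
  have ha : 4 ≤ a := by
    have : (1:ℝ) ≤ (n:ℝ) := by exact_mod_cast hn
    simp only [ha_def]; linarith
  have e1 : (∫ ζ in (a + 1)..(a + 3/2), Nf ζ) + (∫ ζ in (a + 3/2)..(a + 3), Nf ζ)
      = ∫ ζ in (a + 1)..(a + 3), Nf ζ :=
    intervalIntegral.integral_add_adjacent_intervals (Nf_int _ _) (Nf_int _ _)
  have e2 : (∫ ζ in (a + 3/2)..(a + 5/2), Nf ζ) + (∫ ζ in (a + 5/2)..(a + 3), Nf ζ)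
      = ∫ ζ in (a + 3/2)..(a + 3), Nf ζ :=
    intervalIntegral.integral_add_adjacent_intervals (Nf_int _ _) (Nf_int _ _)
  have h1 : (∫ ζ in (a + 1)..(a + 3/2), Nf ζ) ≤ 0 := by
    have := intervalIntegral.integral_mono_on (f := Nf) (g := fun _ : ℝ => (0:ℝ))
      (a := a + 1) (b := a + 3/2) (μ := MeasureTheory.volume)
      (by linarith) (Nf_int _ _) (intervalIntegrable_const) ?_
    · simpa using this
    · intro u hu
      have hu1 := hu.1; have hu2 := hu.2
      have : |u - (4 * n + 2)| ≤ 1 := by rw [abs_le]; constructor <;> [linarith; linarith]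
      exact mul_nonpos_of_nonneg_of_nonpos (Real.exp_nonneg _) (cos_nonpos_near n u this)
  have h3 : (∫ ζ in (a + 5/2)..(a + 3), Nf ζ) ≤ 0 := by
    have := intervalIntegral.integral_mono_on (f := Nf) (g := fun _ : ℝ => (0:ℝ))
      (a := a + 5/2) (b := a + 3) (μ := MeasureTheory.volume)
      (by linarith) (Nf_int _ _) (intervalIntegrable_const) ?_
    · simpa using this
    · intro u hu
      have hu1 := hu.1; have hu2 := hu.2
      have : |u - (4 * n + 2)| ≤ 1 := by rw [abs_le]; constructor <;> [linarith; linarith]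
      exact mul_nonpos_of_nonneg_of_nonpos (Real.exp_nonneg _) (cos_nonpos_near n u this)
  have h2 : (∫ ζ in (a + 3/2)..(a + 5/2), Nf ζ) ≤
      -((1 / 2) * Real.exp ((a + 3 / 2) ^ 2)) := by
    have hmono := intervalIntegral.integral_mono_on (f := Nf)
      (g := fun _ : ℝ => -((1 / 2) * Real.exp ((a + 3 / 2) ^ 2)))
      (a := a + 3/2) (b := a + 5/2) (μ := MeasureTheory.volume)
      (by linarith) (Nf_int _ _) (intervalIntegrable_const) ?_
    · have hc : (∫ _ in (a + 3/2)..(a + 5/2),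
          (-((1 / 2) * Real.exp ((a + 3 / 2) ^ 2)) : ℝ)) =
          -((1 / 2) * Real.exp ((a + 3 / 2) ^ 2)) := by
        rw [intervalIntegral.integral_const]
        have : (a + 5/2) - (a + 3/2) = 1 := by ring
        rw [this, one_smul]
      rw [hc] at hmono
      exact hmono
    · intro x hx
      have hx1 := hx.1; have hx2 := hx.2
      have habs : |x - (4 * n + 2)| ≤ 1 / 2 := by
        rw [abs_le]; constructor <;> [linarith; linarith]
      have hcos := cos_le_neg_half_near n x habs
      have hexp : Real.exp ((a + 3 / 2) ^ 2) ≤ Real.exp (x ^ 2) := by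
        apply Real.exp_le_exp.2; nlinarith
      unfold Nf
      nlinarith [Real.exp_nonneg (x ^ 2)]
  linarith

lemma key (M b : ℝ) (hb : 36 * (|M| + 1) + 35 ≤ b) :
    M * (b + 2) < (1 / 2) * Real.exp ((b + 1 / 2) ^ 2) - b * Real.exp (b ^ 2) := by
  set c : ℝ := |M| + 1 with hc_def
  have hc1 : 1 ≤ c := by rw [hc_def]; linarith [abs_nonneg M]
  have hMc : M < c := by
    have := le_abs_self M; simp only [hc_def]; linarith
  have hb0 : (71:ℝ) ≤ b := by nlinarith
  have h1 : Real.exp ((b + 1 / 2) ^ 2) = Real.exp (b ^ 2) * Real.exp (b + 1 / 4) := by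
    rw [← Real.exp_add]; ring_nf
  have h2 : (1 + b / 2) ^ 2 ≤ Real.exp b := by
    have e1 : Real.exp b = Real.exp (b / 2) * Real.exp (b / 2) := by
      rw [← Real.exp_add]; ring_nf
    have e2 : 1 + b / 2 ≤ Real.exp (b / 2) := by
      have := Real.add_one_le_exp (b / 2); linarith
    have e3 : (0:ℝ) ≤ 1 + b / 2 := by linarith
    nlinarith
  have h3 : Real.exp b ≤ Real.exp (b + 1 / 4) := Real.exp_le_exp.2 (by linarith)
  have h4 : 1 ≤ Real.exp (b ^ 2) := Real.one_le_exp (by positivity)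
  -- X := (1/2) exp(b+1/4) - b ≥ b²/8 - b/2 + 1/2
  have hX : b ^ 2 / 8 - b / 2 + 1 / 2 ≤ (1 / 2) * Real.exp (b + 1 / 4) - b := by
    nlinarith
  have harith : c * (b + 2) ≤ b ^ 2 / 8 - b / 2 + 1 / 2 := by
    nlinarith [mul_le_mul_of_nonneg_right hb (by linarith : (0:ℝ) ≤ b),
      mul_le_mul_of_nonneg_left hb (by linarith : (0:ℝ) ≤ c)]
  have hXpos : 0 ≤ (1 / 2) * Real.exp (b + 1 / 4) - b := by nlinarith
  have hfinal : c * (b + 2) ≤ Real.exp (b ^ 2) * ((1 / 2) * Real.exp (b + 1 / 4) - b) := by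
    calc c * (b + 2) ≤ (1 / 2) * Real.exp (b + 1 / 4) - b := by linarith
      _ ≤ Real.exp (b ^ 2) * ((1 / 2) * Real.exp (b + 1 / 4) - b) :=
          le_mul_of_one_le_left hXpos h4
  have hrw : (1 / 2) * Real.exp ((b + 1 / 2) ^ 2) - b * Real.exp (b ^ 2)
      = Real.exp (b ^ 2) * ((1 / 2) * Real.exp (b + 1 / 4) - b) := by
    rw [h1]; ring
  rw [hrw]
  have hlt : M * (b + 2) < c * (b + 2) := by nlinarith
  exact hlt.trans_le hfinal

lemma Fpos (n : ℕ) (hn : 1 ≤ n) :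
    (1 / 2) * Real.exp ((4 * (n:ℝ) - 1 / 2) ^ 2)
      - (4 * (n:ℝ) - 1) * Real.exp ((4 * (n:ℝ) - 1) ^ 2) ≤
      ∫ ζ in (0:ℝ)..(4 * (n:ℝ) + 1), Nf ζ := by
  have hn1 : (1:ℝ) ≤ (n:ℝ) := by exact_mod_cast hn
  have e1 : (∫ ζ in (0:ℝ)..(4 * (n:ℝ) - 1), Nf ζ)
      + (∫ ζ in (4 * (n:ℝ) - 1)..(4 * (n:ℝ) + 1), Nf ζ)
      = ∫ ζ in (0:ℝ)..(4 * (n:ℝ) + 1), Nf ζ :=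
    intervalIntegral.integral_add_adjacent_intervals (Nf_int _ _) (Nf_int _ _)
  have h1 := absF (4 * (n:ℝ) - 1) (by linarith)
  have h2 := humpPos n hn
  rw [abs_le] at h1
  linarith [h1.1]

lemma Fneg (n : ℕ) (hn : 1 ≤ n) :
    (∫ ζ in (0:ℝ)..(4 * (n:ℝ) + 3), Nf ζ) ≤
      (4 * (n:ℝ) + 1) * Real.exp ((4 * (n:ℝ) + 1) ^ 2)
      - (1 / 2) * Real.exp ((4 * (n:ℝ) + 3 / 2) ^ 2) := by
  have hn1 : (1:ℝ) ≤ (n:ℝ) := by exact_mod_cast hn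
  have e1 : (∫ ζ in (0:ℝ)..(4 * (n:ℝ) + 1), Nf ζ)
      + (∫ ζ in (4 * (n:ℝ) + 1)..(4 * (n:ℝ) + 3), Nf ζ)
      = ∫ ζ in (0:ℝ)..(4 * (n:ℝ) + 3), Nf ζ :=
    intervalIntegral.integral_add_adjacent_intervals (Nf_int _ _) (Nf_int _ _)
  have h1 := absF (4 * (n:ℝ) + 1) (by linarith)
  have h2 := humpNeg n hn
  rw [abs_le] at h1
  linarith [h1.2]

theorem stmt_16 :
    (∀ ζ : ℝ, Real.exp ((-ζ) ^ 2) * Real.cos ((π / 2) * (-ζ)) =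
      Real.exp (ζ ^ 2) * Real.cos ((π / 2) * ζ)) ∧
    (∀ M : ℝ,
      (∃ᶠ s in atTop, M <
        (1 / s) * ∫ ζ in (0 : ℝ)..s, Real.exp (ζ ^ 2) * Real.cos ((π / 2) * ζ)) ∧
      (∃ᶠ s in atTop,
        (1 / s) * (∫ ζ in (0 : ℝ)..s, Real.exp (ζ ^ 2) * Real.cos ((π / 2) * ζ)) < -M)) := by
  constructor
  · intro ζ
    rw [neg_pow, mul_neg, Real.cos_neg]
    ring_nf
  · intro M
    have hNf : ∀ s : ℝ, (∫ ζ in (0:ℝ)..s, Real.exp (ζ ^ 2) * Real.cos ((π / 2) * ζ))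
        = ∫ ζ in (0:ℝ)..s, Nf ζ := fun s => rfl
    constructor
    · rw [frequently_atTop]
      intro a
      obtain ⟨n, hn⟩ := exists_nat_ge (max a (9 * (|M| + 1) + 9))
      have hna : a ≤ (n:ℝ) := le_trans (le_max_left _ _) hn
      have hnM : 9 * (|M| + 1) + 9 ≤ (n:ℝ) := le_trans (le_max_right _ _) hn
      have habs : 0 ≤ |M| := abs_nonneg M
      have hn1' : (1:ℝ) ≤ (n:ℝ) := by nlinarith
      have hn1 : 1 ≤ n := by exact_mod_cast hn1'
      refine ⟨4 * (n:ℝ) + 1, by linarith, ?_⟩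
      have hs : (0:ℝ) < 4 * (n:ℝ) + 1 := by linarith
      rw [hNf, one_div_mul_eq_div, lt_div_iff₀ hs]
      have hk := key M (4 * (n:ℝ) - 1) (by linarith)
      have hF := Fpos n hn1
      have he : (4 * (n:ℝ) - 1) + 1 / 2 = 4 * (n:ℝ) - 1 / 2 := by ring
      have he2 : (4 * (n:ℝ) - 1) + 2 = 4 * (n:ℝ) + 1 := by ring
      rw [he, he2] at hk
      linarith
    · rw [frequently_atTop]
      intro a
      obtain ⟨n, hn⟩ := exists_nat_ge (max a (9 * (|M| + 1) + 9))
      have hna : a ≤ (n:ℝ) := le_trans (le_max_left _ _) hn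
      have hnM : 9 * (|M| + 1) + 9 ≤ (n:ℝ) := le_trans (le_max_right _ _) hn
      have habs : 0 ≤ |M| := abs_nonneg M
      have hn1' : (1:ℝ) ≤ (n:ℝ) := by nlinarith
      have hn1 : 1 ≤ n := by exact_mod_cast hn1'
      refine ⟨4 * (n:ℝ) + 3, by linarith, ?_⟩
      have hs : (0:ℝ) < 4 * (n:ℝ) + 3 := by linarith
      rw [hNf, one_div_mul_eq_div, div_lt_iff₀ hs]
      have hk := key M (4 * (n:ℝ) + 1) (by linarith)
      have hF := Fneg n hn1
      have he : (4 * (n:ℝ) + 1) + 1 / 2 = 4 * (n:ℝ) + 3 / 2 := by ring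
      have he2 : (4 * (n:ℝ) + 1) + 2 = 4 * (n:ℝ) + 3 := by ring
      rw [he, he2] at hk
      nlinarith
end

section
/- Suppose |x_i(0)| < k_{ci} for all i, V: [0,∞) → [0,∞) is continuous with V(t) ≤ V(0)e^{−Ct} + D/C for all t ≥ 0 (C > 0, D ≥ 0), and for each i the iBLF term V_{zi}(t) = ∫₀^{z_i(t)} σk_{ci}²/(k_{ci}² − (σ + α_{i−1}(t))²)dσ satisfies V_{zi}(t) ≤ V(t) whenever |x_i(t)| < k_{ci}. If additionally V_{zi}(z_i, α) → ∞ as |z_i + α| → k_{ci} (with |α| < k_{ci} fixed), and x_i is continuous, then |x_i(t)| < k_{ci} for all t ≥ 0. -/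
set_option maxHeartbeats 1000000

open intervalIntegral Real Set

lemma key_blow (kc : ℝ) (hkc : 0 < kc) (α0 : ℝ) (hα0 : |α0| < kc) (B : ℝ) :
    ∃ ε > 0, ∀ zv αv : ℝ, |αv - α0| < ε → kc - ε < zv + αv → zv + αv < kc →
      B < ∫ σ in (0:ℝ)..zv, σ * kc ^ 2 / (kc ^ 2 - (σ + αv) ^ 2) := by
  have habs := abs_lt.1 hα0
  set z0 : ℝ := kc - α0 with hz0def
  have hz0 : 0 < z0 := by simp only [hz0def]; linarith [habs.2]
  set a : ℝ := z0 / 2 with hadef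
  set m : ℝ := 3 * z0 / 8 with hmdef
  set K : ℝ := a * kc / 2 with hKdef
  have hapos : 0 < a := by positivity
  have hmpos : 0 < m := by positivity
  have hKpos : 0 < K := by positivity
  set ε3 : ℝ := m * Real.exp (-(B + 1) / K) with hε3def
  have hε3pos : 0 < ε3 := by positivity
  refine ⟨min (min (kc - |α0|) (z0 / 8)) ε3, by
    refine lt_min (lt_min (by linarith [abs_lt.2 habs]) (by positivity)) hε3pos, ?_⟩
  intro zv αv hαε hx1 hx2
  set ε : ℝ := min (min (kc - |α0|) (z0 / 8)) ε3 with hεdef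
  have hε1 : ε ≤ kc - |α0| := le_trans (min_le_left _ _) (min_le_left _ _)
  have hε2 : ε ≤ z0 / 8 := le_trans (min_le_left _ _) (min_le_right _ _)
  have hε3le : ε ≤ ε3 := min_le_right _ _
  have hεpos : 0 < ε := lt_min (lt_min (by linarith [abs_lt.2 habs, abs_nonneg α0]) (by positivity)) hε3pos
  have hαvd := abs_lt.1 hαε
  have hαvlt : |αv| < kc := by
    have : |αv| ≤ |α0| + |αv - α0| := by
      have := abs_add_le α0 (αv - α0); simpa using this
    linarith
  have hαvd2 := abs_lt.1 hαvlt
  set x := zv + αv with hxdef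
  -- basic bounds
  have hα0abs := abs_nonneg α0
  have hαub : αv < α0 + ε := by linarith [hαvd.2]
  have hαlb : α0 - ε < αv := by linarith [hαvd.1]
  have hzvlb : a < zv := by
    have : zv = x - αv := by simp [hxdef]
    have h1 : kc - ε - (α0 + ε) < zv := by rw [this]; linarith
    have : z0 - 2 * ε ≤ kc - ε - (α0 + ε) + 0 := by simp [hz0def]; ring_nf; linarith
    simp only [hadef]; linarith
  have hxlt : 0 < kc - x := by linarith
  have hxgt : kc - x < ε := by linarith
  -- denominator positive on [0, zv]
  have hden : ∀ σ ∈ Icc (0:ℝ) zv, 0 < kc ^ 2 - (σ + αv) ^ 2 := by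
    intro σ hσ
    have h1 : σ + αv ≤ x := by simp only [hxdef]; linarith [hσ.2]
    have h2 : -kc < σ + αv := by linarith [hσ.1, hαvd2.1]
    nlinarith [hσ.1, hσ.2]
  set f : ℝ → ℝ := fun σ => σ * kc ^ 2 / (kc ^ 2 - (σ + αv) ^ 2) with hfdef
  have hfc : ContinuousOn f (Icc 0 zv) := by
    apply ContinuousOn.div
    · fun_prop
    · fun_prop
    · intro σ hσ; exact (hden σ hσ).ne'
  have h0zv : (0:ℝ) ≤ zv := le_of_lt (lt_trans hapos hzvlb)
  have hint1 : IntervalIntegrable f MeasureTheory.volume 0 a :=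
    (hfc.mono (by rw [uIcc_of_le (le_of_lt hapos)]; exact Icc_subset_Icc le_rfl (le_of_lt hzvlb))).intervalIntegrable
  have hint2 : IntervalIntegrable f MeasureTheory.volume a zv :=
    (hfc.mono (by rw [uIcc_of_le (le_of_lt hzvlb)]; exact Icc_subset_Icc (le_of_lt hapos) le_rfl)).intervalIntegrable
  have hsplit : (∫ σ in (0:ℝ)..a, f σ) + ∫ σ in a..zv, f σ = ∫ σ in (0:ℝ)..zv, f σ :=
    integral_add_adjacent_intervals hint1 hint2
  have hnn : 0 ≤ ∫ σ in (0:ℝ)..a, f σ := by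
    apply intervalIntegral.integral_nonneg (le_of_lt hapos)
    intro σ hσ
    have hσ' : σ ∈ Icc (0:ℝ) zv := ⟨hσ.1, le_trans hσ.2 (le_of_lt hzvlb)⟩
    exact div_nonneg (by nlinarith [hσ.1]) (le_of_lt (hden σ hσ'))
  -- comparison function
  set g : ℝ → ℝ := fun σ => K / (kc - αv - σ) with hgdef
  have hdeng : ∀ σ ∈ Icc a zv, 0 < kc - αv - σ := by
    intro σ hσ
    have : kc - αv - zv ≤ kc - αv - σ := by linarith [hσ.2]
    have hx' : kc - αv - zv = kc - x := by simp [hxdef]; ring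
    linarith [hx' ▸ this]
  have hgc : ContinuousOn g (Icc a zv) := by
    apply ContinuousOn.div continuousOn_const (by fun_prop)
    intro σ hσ; exact (hdeng σ hσ).ne'
  have hintg : IntervalIntegrable g MeasureTheory.volume a zv :=
    (hgc.mono (by rw [uIcc_of_le (le_of_lt hzvlb)])).intervalIntegrable
  have hcomp : (∫ σ in a..zv, g σ) ≤ ∫ σ in a..zv, f σ := by
    apply intervalIntegral.integral_mono_on (le_of_lt hzvlb) hintg hint2
    intro σ hσ
    have hσ' : σ ∈ Icc (0:ℝ) zv := ⟨le_trans (le_of_lt hapos) hσ.1, hσ.2⟩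
    have hd1 := hdeng σ hσ
    have hd2 := hden σ hσ'
    have hub : σ + αv < kc := by linarith [hσ.2, hxlt]
    rw [hgdef, hfdef, div_le_div_iff₀ hd1 hd2]
    have hσa := hσ.1
    -- K (kc²-(σ+αv)²) ≤ σ kc² (kc-αv-σ)
    have hfac : kc ^ 2 - (σ + αv) ^ 2 = (kc - αv - σ) * (kc + σ + αv) := by ring
    rw [hfac]
    have h2kc : kc + σ + αv ≤ 2 * kc := by linarith
    have hKle : K * (kc + σ + αv) ≤ σ * kc ^ 2 := by
      have h1 : K * (kc + σ + αv) ≤ K * (2 * kc) := by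
        apply mul_le_mul_of_nonneg_left h2kc (le_of_lt hKpos)
      have h2 : K * (2 * kc) = a * kc ^ 2 := by rw [hKdef]; ring
      have h3 : a * kc ^ 2 ≤ σ * kc ^ 2 :=
        mul_le_mul_of_nonneg_right hσ.1 (sq_nonneg kc)
      linarith
    calc K * ((kc - αv - σ) * (kc + σ + αv)) = (K * (kc + σ + αv)) * (kc - αv - σ) := by ring
      _ ≤ (σ * kc ^ 2) * (kc - αv - σ) := mul_le_mul_of_nonneg_right hKle (le_of_lt hd1)
      _ = σ * kc ^ 2 * (kc - αv - σ) := by ring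
  -- compute ∫ g
  have hgval : (∫ σ in a..zv, g σ) = K * (Real.log (kc - αv - a) - Real.log (kc - αv - zv)) := by
    have hF : ∀ σ ∈ uIcc a zv, HasDerivAt (fun s => -K * Real.log (kc - αv - s)) (g σ) σ := by
      intro σ hσ
      rw [uIcc_of_le (le_of_lt hzvlb)] at hσ
      have hd1 := hdeng σ hσ
      have hlin : HasDerivAt (fun s : ℝ => kc - αv - s) (-1) σ := by
        simpa using ((hasDerivAt_id σ).const_sub (kc - αv))
      have hlog := (Real.hasDerivAt_log hd1.ne').comp σ hlin
      have := hlog.const_mul (-K)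
      refine this.congr_deriv ?_
      rw [hgdef]
      field_simp
    rw [integral_eq_sub_of_hasDerivAt hF (by rwa [show g = fun σ => K / (kc - αv - σ) from rfl])]
    ring
  have hza : kc - αv - zv = kc - x := by simp [hxdef]; ring
  have hma : m ≤ kc - αv - a := by
    simp only [hadef, hmdef, hz0def] at *
    linarith
  have hlog1 : Real.log m ≤ Real.log (kc - αv - a) := Real.log_le_log hmpos hma
  have hlog2 : Real.log (kc - x) < Real.log ε3 :=
    lt_of_lt_of_le (Real.log_lt_log hxlt hxgt) (Real.log_le_log hεpos hε3le)
  have hlogε3 : Real.log ε3 = Real.log m + (-(B + 1) / K) := by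
    rw [hε3def, Real.log_mul hmpos.ne' (Real.exp_pos _).ne', Real.log_exp]
  have hfinal : B + 1 ≤ K * (Real.log (kc - αv - a) - Real.log (kc - αv - zv)) := by
    rw [hza]
    have h1 : Real.log m - Real.log ε3 ≤ Real.log (kc - αv - a) - Real.log (kc - x) := by
      linarith
    have h2 : Real.log m - Real.log ε3 = (B + 1) / K := by rw [hlogε3]; ring
    have h3 : (B + 1) / K ≤ Real.log (kc - αv - a) - Real.log (kc - x) := h2 ▸ h1
    calc B + 1 = K * ((B + 1) / K) := by field_simp
      _ ≤ K * (Real.log (kc - αv - a) - Real.log (kc - x)) :=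
        mul_le_mul_of_nonneg_left h3 (le_of_lt hKpos)
  have : B + 1 ≤ ∫ σ in (0:ℝ)..zv, f σ := by
    rw [← hsplit]
    have := hgval ▸ hcomp
    linarith
  calc B < B + 1 := by linarith
    _ ≤ _ := this


lemma neg_int (kc αv zv : ℝ) :
    (∫ σ in (0:ℝ)..(-zv), σ * kc ^ 2 / (kc ^ 2 - (σ + -αv) ^ 2)) =
      ∫ σ in (0:ℝ)..zv, σ * kc ^ 2 / (kc ^ 2 - (σ + αv) ^ 2) := by
  have h := intervalIntegral.integral_comp_neg (a := (0:ℝ)) (b := zv)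
    (fun σ => σ * kc ^ 2 / (kc ^ 2 - (σ + -αv) ^ 2))
  simp only [neg_zero] at h
  have h2 : (∫ σ in (0:ℝ)..zv, (-σ) * kc ^ 2 / (kc ^ 2 - (-σ + -αv) ^ 2)) =
      ∫ σ in (-zv)..(0:ℝ), σ * kc ^ 2 / (kc ^ 2 - (σ + -αv) ^ 2) := h
  have h3 : ∀ σ : ℝ, (-σ) * kc ^ 2 / (kc ^ 2 - (-σ + -αv) ^ 2) =
      -(σ * kc ^ 2 / (kc ^ 2 - (σ + αv) ^ 2)) := by
    intro σ
    have : (-σ + -αv) ^ 2 = (σ + αv) ^ 2 := by ring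
    rw [this, ← neg_div, neg_mul]
  simp only [h3] at h2
  rw [intervalIntegral.integral_neg, ← intervalIntegral.integral_symm] at h2
  have e1 : (∫ σ in (0:ℝ)..(-zv), σ * kc ^ 2 / (kc ^ 2 - (σ + -αv) ^ 2)) =
      -∫ σ in (-zv)..(0:ℝ), σ * kc ^ 2 / (kc ^ 2 - (σ + -αv) ^ 2) :=
    intervalIntegral.integral_symm _ _
  have e2 : (∫ σ in (zv:ℝ)..0, σ * kc ^ 2 / (kc ^ 2 - (σ + αv) ^ 2)) =
      -∫ σ in (0:ℝ)..zv, σ * kc ^ 2 / (kc ^ 2 - (σ + αv) ^ 2) :=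
    intervalIntegral.integral_symm _ _
  linarith [e1, e2, h2]


theorem stmt_19 (kc C D : ℝ) (V : ℝ → ℝ) (z α : ℝ → ℝ)
    (hkc : 0 < kc) (hC : 0 < C) (hD : 0 ≤ D)
    (hzc : Continuous z) (hαc : Continuous α)
    (hα : ∀ t : ℝ, |α t| < kc)
    (hx0 : |z 0 + α 0| < kc)
    (hVc : Continuous V) (hVnn : ∀ t : ℝ, 0 ≤ V t)
    (hVb : ∀ t : ℝ, 0 ≤ t → V t ≤ V 0 * Real.exp (-C * t) + D / C)
    (hiBLF : ∀ t : ℝ, 0 ≤ t → |z t + α t| < kc →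
      (∫ σ in (0 : ℝ)..z t, σ * kc ^ 2 / (kc ^ 2 - (σ + α t) ^ 2)) ≤ V t)
    (hblow : ∀ α' : ℝ, |α'| < kc → ∀ M : ℝ, ∃ δ > 0, ∀ w : ℝ,
      |w + α'| < kc → kc - |w + α'| < δ →
        M ≤ ∫ σ in (0 : ℝ)..w, σ * kc ^ 2 / (kc ^ 2 - (σ + α') ^ 2)) :
    ∀ t : ℝ, 0 ≤ t → |z t + α t| < kc := by
  by_contra hcon
  push_neg at hcon
  obtain ⟨t₁, ht₁0, ht₁⟩ := hcon
  set x : ℝ → ℝ := fun t => z t + α t with hxdef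
  have hxc : Continuous x := hzc.add hαc
  set S : Set ℝ := {t | 0 ≤ t ∧ kc ≤ |x t|} with hSdef
  have hSc : IsClosed S := by
    have : S = {t | 0 ≤ t} ∩ {t | kc ≤ |x t|} := rfl
    rw [this]
    exact (isClosed_le continuous_const continuous_id).inter
      (isClosed_le continuous_const hxc.abs)
  have hne : S.Nonempty := ⟨t₁, ht₁0, ht₁⟩
  have hbdd : BddBelow S := ⟨0, fun t ht => ht.1⟩
  set t₀ : ℝ := sInf S with ht₀def
  have ht₀S : t₀ ∈ S := hSc.csInf_mem hne hbdd
  have ht₀0 : 0 ≤ t₀ := ht₀S.1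
  have ht₀pos : 0 < t₀ := by
    rcases lt_or_eq_of_le ht₀0 with h | h
    · exact h
    · exfalso; rw [← h] at ht₀S; exact absurd ht₀S.2 (not_le.2 hx0)
  have hgood : ∀ t, 0 ≤ t → t < t₀ → |x t| < kc := by
    intro t h0 hlt
    by_contra hge
    push_neg at hge
    exact absurd (csInf_le hbdd ⟨h0, hge⟩) (not_le.2 hlt)
  -- |x t₀| = kc
  have hlimle : |x t₀| ≤ kc := by
    have hnb : (nhdsWithin t₀ (Set.Iio t₀)).NeBot := nhdsLT_neBot t₀
    have hlim : Filter.Tendsto (fun t => |x t|) (nhdsWithin t₀ (Set.Iio t₀)) (nhds |x t₀|) :=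
      (hxc.abs.continuousAt).continuousWithinAt.tendsto
    apply le_of_tendsto hlim
    have h1 : ∀ᶠ t in nhdsWithin t₀ (Set.Iio t₀), 0 < t :=
      Filter.Eventually.filter_mono nhdsWithin_le_nhds (eventually_gt_nhds ht₀pos)
    have h2 : ∀ᶠ t in nhdsWithin t₀ (Set.Iio t₀), t < t₀ :=
      eventually_mem_nhdsWithin
    filter_upwards [h1, h2] with t hh1 hh2
    exact le_of_lt (hgood t (le_of_lt hh1) hh2)
  have habs : |x t₀| = kc := le_antisymm hlimle ht₀S.2
  -- V bound
  set B : ℝ := V 0 + D / C with hBdef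
  have hVB : ∀ t, 0 ≤ t → V t ≤ B := by
    intro t ht
    have h1 := hVb t ht
    have h2 : Real.exp (-C * t) ≤ 1 := by
      rw [Real.exp_le_one_iff]
      nlinarith
    have h3 : V 0 * Real.exp (-C * t) ≤ V 0 * 1 :=
      mul_le_mul_of_nonneg_left h2 (hVnn 0)
    simp only [hBdef]; linarith
  -- pick nearby time given ε
  have hpick : ∀ ε > 0, ∃ t, 0 ≤ t ∧ t < t₀ ∧ |α t - α t₀| < ε ∧ |x t - x t₀| < ε := by
    intro ε hε
    have hnb : (nhdsWithin t₀ (Set.Iio t₀)).NeBot := nhdsLT_neBot t₀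
    have h1 : ∀ᶠ t in nhds t₀, |α t - α t₀| < ε :=
      (hαc.tendsto t₀).eventually (eventually_abs_sub_lt _ hε)
    have h2 : ∀ᶠ t in nhds t₀, |x t - x t₀| < ε :=
      (hxc.tendsto t₀).eventually (eventually_abs_sub_lt _ hε)
    have h3 : ∀ᶠ t in nhds t₀, 0 < t := eventually_gt_nhds ht₀pos
    have h4 : ∀ᶠ t in nhdsWithin t₀ (Set.Iio t₀), t < t₀ := eventually_mem_nhdsWithin
    have := ((h1.and (h2.and h3)).filter_mono (nhdsWithin_le_nhds (s := Set.Iio t₀))).and h4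
    obtain ⟨t, ⟨ha, hb, hc⟩, hd⟩ := this.exists
    exact ⟨t, le_of_lt hc, hd, ha, hb⟩
  rcases (abs_eq (le_of_lt hkc)).1 habs with hpos | hneg
  · -- x t₀ = kc
    obtain ⟨ε, hε, hkey⟩ := key_blow kc hkc (α t₀) (hα t₀) B
    obtain ⟨t, ht0, htlt, hαt, hxt⟩ := hpick ε hε
    have hxlt : |x t| < kc := hgood t ht0 htlt
    have hxa := abs_lt.1 hxlt
    have hxd := abs_lt.1 hxt
    have := hkey (z t) (α t) hαt (by rw [hpos] at hxd; show kc - ε < x t; linarith [hxd.1]) hxa.2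
    have h2 := hiBLF t ht0 hxlt
    have h3 := hVB t ht0
    exact absurd (lt_of_lt_of_le this (le_trans h2 h3)) (lt_irrefl B)
  · -- x t₀ = -kc
    obtain ⟨ε, hε, hkey⟩ := key_blow kc hkc (-α t₀) (by rw [abs_neg]; exact hα t₀) B
    obtain ⟨t, ht0, htlt, hαt, hxt⟩ := hpick ε hε
    have hxlt : |x t| < kc := hgood t ht0 htlt
    have hxa := abs_lt.1 hxlt
    have hxd := abs_lt.1 hxt
    have hα' : |(-α t) - (-α t₀)| < ε := by
      rw [show (-α t) - (-α t₀) = -(α t - α t₀) by ring, abs_neg]; exact hαt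
    have hsum : (-z t) + (-α t) = -(x t) := by simp [hxdef]; ring
    have := hkey (-z t) (-α t) hα'
      (by rw [hsum, hneg] at *; linarith [hxd.2]) (by rw [hsum]; linarith [hxa.1])
    rw [neg_int kc (α t) (z t)] at this
    have h2 := hiBLF t ht0 hxlt
    have h3 := hVB t ht0
    exact absurd (lt_of_lt_of_le this (le_trans h2 h3)) (lt_irrefl B)
end
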